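/- There is no real solution to the d-dimensional two-term splitting system for d > 2, ℓ ∈ {1,2}, ℓ₁ = 1, ℓ₂ = 2, in which all directional parameters are equal: i.e., there exist no real numbers η₁, η₂, α₁, α₂ satisfying η₁ + η₂/2^d = 1/ℓ!, η₁α₁/2 + η₂α₂/(2^{d−1}·6) = 1/(ℓ+1)!, η₁α₁²/6 + η₂α₂²/(2^{d−1}·24) = 1/(ℓ+2)!, and η₁α₁²/4 + η₂α₂²/(2^{d−2}·36) = 2/(ℓ+2)!. -/

import Mathlib

theorem no_real_two_term_splitting (d : ℕ) (hd : 2 < d) (ℓ : ℕ) (hℓ : ℓ = 1 ∨ ℓ = 2) :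
    ¬ ∃ η₁ η₂ α₁ α₂ : ℝ,
      η₁ + η₂ / 2 ^ d = 1 / (Nat.factorial ℓ : ℝ) ∧
      η₁ * α₁ / 2 + η₂ * α₂ / (2 ^ (d - 1) * 6) = 1 / (Nat.factorial (ℓ + 1) : ℝ) ∧
      η₁ * α₁ ^ 2 / 6 + η₂ * α₂ ^ 2 / (2 ^ (d - 1) * 24)
        = 1 / (Nat.factorial (ℓ + 2) : ℝ) ∧
      η₁ * α₁ ^ 2 / 4 + η₂ * α₂ ^ 2 / (2 ^ (d - 2) * 36)
        = 2 / (Nat.factorial (ℓ + 2) : ℝ) := by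
  rintro ⟨η₁, η₂, α₁, α₂, e1, e2, e3, e4⟩
  obtain ⟨k, rfl⟩ : ∃ k, d = k + 3 := ⟨d - 3, by omega⟩
  have hk1 : k + 3 - 1 = k + 2 := rfl
  have hk2 : k + 3 - 2 = k + 1 := rfl
  rw [hk1] at e2 e3
  rw [hk2] at e4
  have hP : (0:ℝ) < 2 ^ k := by positivity
  set P : ℝ := 2 ^ k with hPdef
  have hPne : P ≠ 0 := ne_of_gt hP
  set b : ℝ := η₂ / P with hb
  have hη₂ : η₂ = b * P := by rw [hb, div_mul_cancel₀ η₂ hPne]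
  have hd0 : (2:ℝ) ^ (k + 3) = 8 * P := by rw [pow_add, hPdef]; ring
  have hd1 : (2:ℝ) ^ (k + 2) = 4 * P := by rw [pow_add, hPdef]; ring
  have hd2 : (2:ℝ) ^ (k + 1) = 2 * P := by rw [pow_add, hPdef]; ring
  rw [hη₂, hd0] at e1
  rw [hη₂, hd1] at e2 e3
  rw [hη₂, hd2] at e4
  have e1' : η₁ + b / 8 = 1 / (Nat.factorial ℓ : ℝ) := by
    rw [← e1]; field_simp
  have e2' : η₁ * α₁ / 2 + b * α₂ / 24 = 1 / (Nat.factorial (ℓ + 1) : ℝ) := by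
    rw [← e2]; field_simp; ring
  have e3' : η₁ * α₁ ^ 2 / 6 + b * α₂ ^ 2 / 96 = 1 / (Nat.factorial (ℓ + 2) : ℝ) := by
    rw [← e3]; field_simp; ring
  have e4' : η₁ * α₁ ^ 2 / 4 + b * α₂ ^ 2 / 72 = 2 / (Nat.factorial (ℓ + 2) : ℝ) := by
    rw [← e4]; field_simp; ring
  rcases hℓ with rfl | rfl
  · norm_num [Nat.factorial] at e1' e2' e3' e4'
    -- c = 1/6
    have h5 : η₁ * α₁ ^ 2 = 4 := by linear_combination (-48) * e3' + 36 * e4'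
    have h6 : b * α₂ ^ 2 = -48 := by linear_combination 864 * e3' + (-576) * e4'
    have h7 : (η₁ * α₁) ^ 2 = 4 * η₁ := by linear_combination η₁ * h5
    have h8 : (b * α₂) ^ 2 = -48 * b := by linear_combination b * h6
    have hx : η₁ * α₁ = 1 - b * α₂ / 12 := by linarith
    have h9 : 4 * η₁ = 1 - (b * α₂) / 6 + (b * α₂) ^ 2 / 144 := by
      rw [← h7, hx]; ring
    have hz : b * α₂ = b - 18 := by linarith
    have h10 : (b - 18) ^ 2 = -48 * b := by rw [← hz]; exact h8
    have h11 : (b + 6) ^ 2 + 288 = 0 := by linear_combination h10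
    linarith [sq_nonneg (b + 6)]
  · norm_num [Nat.factorial] at e1' e2' e3' e4'
    -- c = 1/24
    have h5 : η₁ * α₁ ^ 2 = 1 := by linear_combination (-48) * e3' + 36 * e4'
    have h6 : b * α₂ ^ 2 = -12 := by linear_combination 864 * e3' + (-576) * e4'
    have h7 : (η₁ * α₁) ^ 2 = η₁ := by linear_combination η₁ * h5
    have h8 : (b * α₂) ^ 2 = -12 * b := by linear_combination b * h6
    have hx : η₁ * α₁ = 1 / 3 - b * α₂ / 12 := by linarith
    have h9 : η₁ = 1 / 9 - (b * α₂) / 18 + (b * α₂) ^ 2 / 144 := by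
      rw [← h7, hx]; ring
    have hz : b * α₂ = 3 * b / 4 - 7 := by linarith
    have h10 : (3 * b / 4 - 7) ^ 2 = -12 * b := by rw [← hz]; exact h8
    have h11 : (3 * b + 4) ^ 2 / 16 + 48 = 0 := by linear_combination h10
    linarith [sq_nonneg (3 * b + 4)]
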